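/- Let H be a complex Hilbert space, Σ a positive bounded operator on H, B ≥ 0, β a real number with 1 < β ≤ 3, and ψ ∈ H with ‖ψ‖ ≤ B. Set φ₀ = Σ^{(β−1)/2} ψ, the power being defined via the continuous functional calculus. For λ > 0, let φ_λ ∈ H be the unique solution of Σφ_λ + λφ_λ = Σφ₀ (i.e. φ_λ = (Σ + λ·1)⁻¹ Σ φ₀). Then ‖φ_λ − φ₀‖ ≤ B · λ^{(β−1)/2}. -/

import Mathlib

set_option maxHeartbeats 1000000 in
/-- Source-condition bias bound for Tikhonov regularization: if `S` is a positive
bounded operator on a complex Hilbert space, `φ₀ = S^((β−1)/2) ψ` with `‖ψ‖ ≤ B` and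
`β ∈ (1, 3]`, and `φλ` solves `Sφλ + λφλ = Sφ₀` for `λ > 0`, then
`‖φλ − φ₀‖ ≤ B·λ^((β−1)/2)`. -/
theorem tikhonov_bias_bound
    {H : Type*} [NormedAddCommGroup H] [InnerProductSpace ℂ H] [CompleteSpace H]
    (S : H →L[ℂ] H) (hS : S.IsPositive)
    (B : ℝ) (hB : 0 ≤ B)
    (β : ℝ) (hβ : β ∈ Set.Ioc (1 : ℝ) 3)
    (ψ : H) (hψ : ‖ψ‖ ≤ B)
    (φ₀ : H) (hφ₀ : φ₀ = cfc (fun t : ℝ => t ^ ((β - 1) / 2)) S ψ)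
    (lam : ℝ) (hlam : 0 < lam)
    (φlam : H) (hφlam : S φlam + (lam : ℂ) • φlam = S φ₀) :
    ‖φlam - φ₀‖ ≤ B * lam ^ ((β - 1) / 2) := by
  set r : ℝ := (β - 1) / 2 with hr
  have hr0 : 0 < r := by simp only [hr]; linarith [hβ.1]
  have hr1 : r ≤ 1 := by simp only [hr]; linarith [hβ.2]
  have hSA : IsSelfAdjoint S := hS.isSelfAdjoint
  -- spectrum is nonnegative
  have hspec : ∀ t ∈ spectrum ℝ S, (0 : ℝ) ≤ t := fun t ht =>
    spectrum_nonneg_of_nonneg ((ContinuousLinearMap.nonneg_iff_isPositive S).mpr hS) ht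
  set g : ℝ → ℝ := fun t => lam * t ^ r / (t + lam) with hg
  have hrpow_cont : Continuous (fun t : ℝ => t ^ r) := Real.continuous_rpow_const hr0.le
  have hg_cont : ContinuousOn g (spectrum ℝ S) := by
    apply ContinuousOn.div
    · exact (continuous_const.mul hrpow_cont).continuousOn
    · exact (continuous_id.add continuous_const).continuousOn
    · intro t ht
      have := hspec t ht
      positivity
  -- operator identity
  have e1 : cfc (fun t : ℝ => t * g t) S = S * cfc g S := by
    have h := cfc_mul (fun t : ℝ => t) g S continuous_id.continuousOn hg_cont
    rw [cfc_id' ℝ S hSA] at h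
    exact h
  have e2 : cfc (fun t : ℝ => lam * g t) S = lam • cfc g S :=
    cfc_const_mul lam g S hg_cont
  have e3 : cfc (fun t : ℝ => t * g t) S + cfc (fun t : ℝ => lam * g t) S
      = cfc (fun t : ℝ => t * g t + lam * g t) S :=
    (cfc_add (a := S) (fun t : ℝ => t * g t) (fun t : ℝ => lam * g t)
      (continuous_id.continuousOn.mul hg_cont)
      (continuous_const.continuousOn.mul hg_cont)).symm
  have e4 : cfc (fun t : ℝ => t * g t + lam * g t) S = cfc (fun t : ℝ => lam * t ^ r) S := by
    apply cfc_congr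
    intro t ht
    have h0 : 0 ≤ t := hspec t ht
    have hpos : 0 < t + lam := by linarith
    show t * (lam * t ^ r / (t + lam)) + lam * (lam * t ^ r / (t + lam)) = lam * t ^ r
    field_simp
  have e5 : cfc (fun t : ℝ => lam * t ^ r) S = lam • cfc (fun t : ℝ => t ^ r) S :=
    cfc_const_mul lam _ S hrpow_cont.continuousOn
  have op_eq : S * cfc g S + lam • cfc g S = lam • cfc (fun t : ℝ => t ^ r) S := by
    rw [← e1, ← e2, e3, e4, e5]
  -- apply to ψ
  set c : H := cfc g S ψ with hc
  have hv : S c + (lam : ℂ) • c = (lam : ℂ) • φ₀ := by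
    have h := congrArg (fun T : H →L[ℂ] H => T ψ) op_eq
    simp only [ContinuousLinearMap.add_apply, ContinuousLinearMap.mul_apply,
      ContinuousLinearMap.smul_apply] at h
    have hcoe : ∀ x : H, (lam : ℂ) • x = lam • x := fun x => by
      rw [← algebraMap_smul ℂ lam x]; rfl
    rw [hcoe, hcoe, hφ₀, hc]
    exact h
  -- the combined vector is zero
  set z : H := φlam - φ₀ + c with hz
  have hz0 : S z + (lam : ℂ) • z = 0 := by
    simp only [hz, map_add, map_sub, smul_add, smul_sub]
    have h1 : S φlam = S φ₀ - (lam : ℂ) • φlam := by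
      rw [← hφlam]; abel
    rw [h1]
    have h2 : S c = (lam : ℂ) • φ₀ - (lam : ℂ) • c := by
      rw [← hv]; abel
    rw [h2]
    abel
  have hzz : z = 0 := by
    have h2 : (inner ℂ (S z) z : ℂ) + (lam : ℂ) * (inner ℂ z z : ℂ) = 0 := by
      have h := congrArg (fun v => (inner ℂ v z : ℂ)) hz0
      simp only [inner_add_left, inner_zero_left] at h
      rw [inner_smul_left, Complex.conj_ofReal] at h
      exact h
    have h3 : (inner ℂ (S z) z : ℂ).re + lam * ‖z‖ ^ 2 = 0 := by
      have h := congrArg Complex.re h2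
      rw [inner_self_eq_norm_sq_to_K (𝕜 := ℂ) z] at h
      simpa [← Complex.ofReal_pow, ← Complex.ofReal_mul] using h
    have hpos' : 0 ≤ (inner ℂ (S z) z : ℂ).re := by
      have h := hS.re_inner_nonneg_left z
      simpa [RCLike.re_to_complex] using h
    have hnz : ‖z‖ ^ 2 ≤ 0 := by nlinarith
    have : ‖z‖ = 0 := by nlinarith [norm_nonneg z]
    exact norm_eq_zero.mp this
  have hdiff : φlam - φ₀ = -c := by
    have h : φlam - φ₀ + c = 0 := hzz
    linear_combination (norm := abel) h
  -- norm bound via cfc sup-norm estimate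
  have hopnorm : ‖cfc g S‖ ≤ lam ^ r := by
    apply norm_cfc_le (by positivity)
    intro t ht
    have h0 : 0 ≤ t := hspec t ht
    have hpos : 0 < t + lam := by linarith
    have hgn : 0 ≤ g t := by
      apply div_nonneg _ hpos.le
      positivity
    rw [Real.norm_of_nonneg hgn]
    show lam * t ^ r / (t + lam) ≤ lam ^ r
    rw [div_le_iff₀ hpos]
    have hamgm : t ^ r * lam ^ (1 - r) ≤ r * t + (1 - r) * lam := by
      have h := Real.geom_mean_le_arith_mean2_weighted hr0.le
        (by linarith : (0:ℝ) ≤ 1 - r) h0 hlam.le (by ring)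
      linarith [h]
    have hsplit : lam ^ r * lam ^ (1 - r) = lam := by
      rw [← Real.rpow_add hlam]; norm_num
    calc lam * t ^ r = lam ^ r * (t ^ r * lam ^ (1 - r)) := by
          conv_lhs => rw [← hsplit]
          ring
      _ ≤ lam ^ r * (r * t + (1 - r) * lam) :=
          mul_le_mul_of_nonneg_left hamgm (by positivity)
      _ ≤ lam ^ r * (t + lam) := by
          apply mul_le_mul_of_nonneg_left _ (by positivity)
          nlinarith
  calc ‖φlam - φ₀‖ = ‖c‖ := by rw [hdiff, norm_neg]
    _ ≤ ‖cfc g S‖ * ‖ψ‖ := (cfc g S).le_opNorm ψ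
    _ ≤ lam ^ r * B := mul_le_mul hopnorm hψ (norm_nonneg _) (by positivity)
    _ = B * lam ^ r := by ring
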